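/- Let A be a unital commutative ℝ-algebra, (T_a)_{a∈A} a family of positive reals, and C the unital convex cone generated by {(T_a − a)^j (T_a + a)^k : a ∈ A, j,k ∈ ℕ₀}. If c ∈ A satisfies α(c) > 0 for every α in K = {α ∈ X(A) : |α(a)| ≤ T_a for all a ∈ A}, then c ∈ C. -/

import Mathlib

open Finset Set

variable {A : Type*} [CommRing A] [Algebra ℝ A]

namespace Stmt8

variable {T : A → ℝ}

def IsGen (T : A → ℝ) (g : A) : Prop := ∃ (a : A) (p q : ℕ),
  g = (algebraMap ℝ A (T a) - a) ^ p * (algebraMap ℝ A (T a) + a) ^ q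

def InC (T : A → ℝ) (x : A) : Prop :=
  ∃ (k : ℕ) (coef : Fin k → ℝ) (g : Fin k → A),
    (∀ i, 0 ≤ coef i) ∧ (∀ i, IsGen T (g i)) ∧ x = ∑ i, coef i • g i

lemma inC_zero : InC T 0 := ⟨0, ![], ![], by simp, by simp, by simp⟩

lemma inC_smul_gen {g : A} (hg : IsGen T g) {r : ℝ} (hr : 0 ≤ r) : InC T (r • g) :=
  ⟨1, ![r], ![g], by simpa, by simpa, by simp⟩

lemma inC_gen {g : A} (hg : IsGen T g) : InC T g := by
  simpa using inC_smul_gen hg (zero_le_one)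

lemma inC_add {x y : A} (hx : InC T x) (hy : InC T y) : InC T (x + y) := by
  obtain ⟨k₁, c₁, g₁, hc₁, hg₁, rfl⟩ := hx
  obtain ⟨k₂, c₂, g₂, hc₂, hg₂, rfl⟩ := hy
  refine ⟨k₁ + k₂, Fin.append c₁ c₂, Fin.append g₁ g₂, ?_, ?_, ?_⟩
  · intro i
    induction i using Fin.addCases with
    | left i => simpa using hc₁ i
    | right i => simpa using hc₂ i
  · intro i
    induction i using Fin.addCases with
    | left i => simpa using hg₁ i
    | right i => simpa using hg₂ i
  · rw [Fin.sum_univ_add]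
    congr 1 <;> [skip; skip] <;> apply Finset.sum_congr rfl <;> intro i _ <;> simp

lemma inC_smul {x : A} (hx : InC T x) {r : ℝ} (hr : 0 ≤ r) : InC T (r • x) := by
  obtain ⟨k, c, g, hc, hg, rfl⟩ := hx
  refine ⟨k, fun i => r * c i, g, fun i => mul_nonneg hr (hc i), hg, ?_⟩
  rw [Finset.smul_sum]
  exact Finset.sum_congr rfl fun i _ => by rw [smul_smul]

lemma inC_sum {ι : Type*} (s : Finset ι) (f : ι → A) (h : ∀ i ∈ s, InC T (f i)) :
    InC T (∑ i ∈ s, f i) := by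
  classical
  induction s using Finset.induction with
  | empty => simpa using inC_zero
  | insert _ _ hi ih =>
    rw [Finset.sum_insert hi]
    exact inC_add (h _ (Finset.mem_insert_self _ _))
      (ih fun i hmem => h i (Finset.mem_insert_of_mem hmem))


lemma pow_sub_pow_expand (u v : A) (n : ℕ) :
    (u+v)^n - (v-u)^n
      = ∑ j ∈ range (n+1), ((1 - (-1:ℝ)^j) * (n.choose j)) • (u^j * v^(n-j)) := by
  have h2 : (v - u)^n = ∑ j ∈ range (n+1),
      ((-1:ℝ)^j) • (u^j * v^(n-j) * (n.choose j : A)) := by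
    have hvu : v - u = (-u) + v := by ring
    rw [hvu, add_pow]
    refine Finset.sum_congr rfl fun j _ => ?_
    have hneg : (-u)^j = ((-1:ℝ)^j) • u^j := by
      rw [← neg_one_smul ℝ u, smul_pow]
    rw [hneg, smul_mul_assoc, smul_mul_assoc]
  rw [add_pow, h2, ← Finset.sum_sub_distrib]
  refine Finset.sum_congr rfl fun j _ => ?_
  have hc : u^j * v^(n-j) * (n.choose j : A) = ((n.choose j : ℝ)) • (u^j * v^(n-j)) := by
    rw [Algebra.smul_def, map_natCast]; ring
  rw [hc, smul_smul, ← sub_smul]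
  ring_nf

lemma even_pow (hT : ∀ a : A, 0 < T a) (w : A) (k : ℕ) :
    InC T (algebraMap ℝ A (T w ^ (2*k)) - w^(2*k)) := by
  set t := T w with ht
  set u : A := algebraMap ℝ A t - w with hu
  set v : A := algebraMap ℝ A t + w with hv
  have huv : u + v = algebraMap ℝ A (2*t) := by
    rw [hu, hv, map_mul, map_ofNat]; ring
  have hvu : v - u = 2 * w := by rw [hu, hv]; ring
  have key : algebraMap ℝ A ((2*t)^(2*k)) - algebraMap ℝ A ((2:ℝ)^(2*k)) * w^(2*k)
      = ∑ j ∈ range (2*k+1), ((1 - (-1:ℝ)^j) * ((2*k).choose j)) • (u^j * v^(2*k-j)) := by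
    rw [← pow_sub_pow_expand, huv, hvu, ← map_pow, mul_pow]
    congr 1
    rw [map_pow, map_ofNat, mul_pow]
  have hsum : InC T (algebraMap ℝ A ((2*t)^(2*k)) - algebraMap ℝ A ((2:ℝ)^(2*k)) * w^(2*k)) := by
    rw [key]
    refine inC_sum _ _ fun j _ => ?_
    refine inC_smul_gen ⟨w, j, 2*k-j, rfl⟩ ?_
    have h1 : (-1:ℝ)^j ≤ 1 := by
      rcases Nat.even_or_odd j with h | h
      · rw [h.neg_one_pow]
      · rw [h.neg_one_pow]; norm_num
    have h2 : (0:ℝ) ≤ ((2*k).choose j : ℝ) := Nat.cast_nonneg _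
    nlinarith
  have hfin : algebraMap ℝ A (t ^ (2*k)) - w^(2*k)
      = ((2:ℝ)^(2*k))⁻¹ • ((algebraMap ℝ A ((2*t)^(2*k)) - algebraMap ℝ A ((2:ℝ)^(2*k)) * w^(2*k))) := by
    rw [smul_sub, mul_pow, map_mul, ← Algebra.smul_def, ← Algebra.smul_def, smul_smul, smul_smul,
      inv_mul_cancel₀ (by positivity), one_smul, one_smul]
  rw [hfin]
  exact inC_smul hsum (by positivity)


lemma add_pow_smul (u v : A) (n : ℕ) :
    (u+v)^n = ∑ j ∈ range (n+1), ((n.choose j : ℝ)) • (u^j * v^(n-j)) := by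
  rw [add_pow]
  refine Finset.sum_congr rfl fun j _ => ?_
  rw [Algebra.smul_def, map_natCast]; ring

set_option maxHeartbeats 1000000 in
lemma sq_add (hT : ∀ a : A, 0 < T a) (x : A) {ε : ℝ} (hε : 0 < ε) :
    InC T (x*x + algebraMap ℝ A ε) := by
  set t := T x with ht
  have ht0 : 0 < t := hT x
  obtain ⟨m, hm⟩ : ∃ m : ℕ, t^2 ≤ ε * (2*m+1) := by
    obtain ⟨m, hm⟩ := exists_nat_ge (t^2/ε)
    refine ⟨m, ?_⟩
    rw [div_le_iff₀ hε] at hm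
    nlinarith
  set n := 2*m with hn
  set u : A := algebraMap ℝ A t - x with hu
  set v : A := algebraMap ℝ A t + x with hv
  have huv : u + v = algebraMap ℝ A (2*t) := by
    rw [hu, hv, map_mul, map_ofNat]; ring
  have huv2 : u * v = algebraMap ℝ A (t^2) - x*x := by
    rw [hu, hv, map_pow]; ring
  set cc : ℕ → ℕ := fun j => if j = 0 then 0 else n.choose (j-1) with hcc
  set c : ℕ → ℝ := fun j => (t^2+ε) * ((n+2).choose j) - 4*t^2 * (cc j) with hc
  -- the second sum
  have hS2 : ∑ j ∈ range (n+2+1), ((cc j : ℝ)) • (u^j * v^(n+2-j)) = u*v*(u+v)^n := by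
    rw [Finset.sum_range_succ']
    have hz : ((cc 0 : ℝ)) • (u^0 * v^(n+2-0)) = 0 := by simp [hcc]
    rw [hz, add_zero]
    have hstep : ∀ j ∈ range (n+2), ((cc (j+1) : ℝ)) • (u^(j+1) * v^(n+2-(j+1)))
        = ((n.choose j : ℝ)) • (u^(j+1) * v^(n+1-j)) := by
      intro j _
      have hxp : n+2-(j+1) = n+1-j := by omega
      rw [hxp]
      congr 1 <;> simp [hcc]
    rw [Finset.sum_congr rfl hstep, Finset.sum_range_succ]
    have : ((n.choose (n+1) : ℝ)) = 0 := by
      rw [Nat.choose_eq_zero_of_lt (by omega)]; simp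
    rw [this, zero_smul, add_zero, add_pow_smul, Finset.mul_sum]
    refine (Finset.sum_congr rfl fun j hj => ?_).symm
    have hjn : j ≤ n := by simpa using Nat.lt_succ_iff.mp (Finset.mem_range.mp hj)
    have hsub : n + 1 - j = (n - j) + 1 := by omega
    rw [hsub, mul_smul_comm]
    congr 1
    ring
  -- coefficients nonneg
  have hcnn : ∀ j, 0 ≤ c j := by
    intro j
    match j with
    | 0 =>
      simp only [hc, hcc, if_pos rfl]
      have h0 : (0:ℝ) ≤ ((n+2).choose 0 : ℝ) := Nat.cast_nonneg _
      norm_num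
      nlinarith
    | (j'+1) =>
      simp only [hc, hcc, if_neg (Nat.succ_ne_zero j'), Nat.add_sub_cancel]
      rcases le_or_gt j' n with hj' | hj'
      · have e1 := Nat.add_one_mul_choose_eq (n+1) j'
        have e2 := Nat.choose_succ_right_eq (n+1) j'
        have e3 := Nat.add_one_mul_choose_eq n j'
        have hC2pos : 0 < ((n+2).choose (j'+1)) := Nat.choose_pos (by omega)
        -- cast to ℝ
        have f1 : ((n:ℝ)+2) * ((n+1).choose j' : ℝ) = ((n+2).choose (j'+1) : ℝ) * ((j':ℝ)+1) := by
          exact_mod_cast congrArg (Nat.cast : ℕ → ℝ) e1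
        have f2 : ((n+1).choose (j'+1) : ℝ) * ((j':ℝ)+1)
            = ((n+1).choose j' : ℝ) * ((n:ℝ)+1-(j':ℝ)) := by
          have : ((n:ℝ)+1-(j':ℝ)) = ((n+1-j' : ℕ) : ℝ) := by
            rw [Nat.cast_sub (by omega)]; push_cast; ring
          rw [this]
          exact_mod_cast congrArg (Nat.cast : ℕ → ℝ) e2
        have f3 : ((n:ℝ)+1) * (n.choose j' : ℝ) = ((n+1).choose (j'+1) : ℝ) * ((j':ℝ)+1) := by
          exact_mod_cast congrArg (Nat.cast : ℕ → ℝ) e3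
        have r4 : ((n+2).choose (j'+1) : ℝ) * (((j':ℝ)+1) * ((n:ℝ)+1-(j':ℝ)))
            = ((n:ℝ)+1)*((n:ℝ)+2)*((n.choose j' : ℝ)) := by
          nlinarith [f1, f2, f3]
        have hJK : ((j':ℝ)+1) * ((n:ℝ)+1-(j':ℝ)) ≤ ((m:ℝ)+1)^2 := by
          have hncast : (n:ℝ) = 2*(m:ℝ) := by rw [hn]; push_cast; ring
          nlinarith [sq_nonneg (((j':ℝ)+1) - ((n:ℝ)+1-(j':ℝ)))]
        have hC2 : (0:ℝ) < ((n+2).choose (j'+1) : ℝ) := by exact_mod_cast hC2pos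
        have hC0 : (0:ℝ) ≤ (n.choose j' : ℝ) := Nat.cast_nonneg _
        have hJpos : (0:ℝ) < ((j':ℝ)+1) := by positivity
        have hKpos : (0:ℝ) < ((n:ℝ)+1-(j':ℝ)) := by
          have : (j':ℝ) ≤ (n:ℝ) := by exact_mod_cast hj'
          linarith
        have hncast : (n:ℝ) = 2*(m:ℝ) := by rw [hn]; push_cast; ring
        have hmain : (t^2+ε) * ((n:ℝ)+1)*((n:ℝ)+2) ≥ 4*t^2*((m:ℝ)+1)^2 := by
          rw [hncast]
          nlinarith [hm, Nat.cast_nonneg (α := ℝ) m]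
        -- conclude (t²+ε) * C2 ≥ 4t² * C0
        rw [sub_nonneg]
        rw [← mul_le_mul_iff_left₀ (mul_pos hJpos hKpos)]
        calc 4*t^2 * (n.choose j' : ℝ) * (((j':ℝ)+1) * ((n:ℝ)+1-(j':ℝ)))
            ≤ 4*t^2 * (n.choose j' : ℝ) * ((m:ℝ)+1)^2 := by
              apply mul_le_mul_of_nonneg_left hJK (by positivity)
          _ ≤ (t^2+ε) * ((n:ℝ)+1)*((n:ℝ)+2) * (n.choose j' : ℝ) := by nlinarith [hmain, hC0]
          _ = (t^2+ε) * (((n+2).choose (j'+1) : ℝ) * (((j':ℝ)+1) * ((n:ℝ)+1-(j':ℝ)))) := by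
              rw [r4]; ring
          _ = (t^2+ε) * ((n+2).choose (j'+1) : ℝ) * (((j':ℝ)+1) * ((n:ℝ)+1-(j':ℝ))) := by ring
      · have hz : n.choose j' = 0 := Nat.choose_eq_zero_of_lt hj'
        rw [hz]
        have h0 : (0:ℝ) ≤ ((n+2).choose (j'+1) : ℝ) := Nat.cast_nonneg _
        norm_num
        nlinarith
  -- key identity
  have hx2 : x*x + algebraMap ℝ A ε = (t^2+ε) • (1:A) - u * v := by
    rw [huv2, Algebra.smul_def, map_add]; ring
  have hpow : algebraMap ℝ A ((2*t)^(n+2)) = (u+v)^(n+2) := by rw [map_pow, huv]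
  have hKI : algebraMap ℝ A ((2*t)^(n+2)) * (x*x + algebraMap ℝ A ε)
      = ∑ j ∈ range (n+2+1), c j • (u^j * v^(n+2-j)) := by
    have hsum1 : (∑ j ∈ range (n+2+1), c j • (u^j * v^(n+2-j)))
        = (t^2+ε) • ((u+v)^(n+2)) - (4*t^2) • (u*v*(u+v)^n) := by
      rw [← hS2]
      have hap : (u+v)^(n+2) = ∑ j ∈ range (n+2+1), (((n+2).choose j : ℝ)) • (u^j * v^(n+2-j)) :=
        add_pow_smul u v (n+2)
      rw [hap, Finset.smul_sum, Finset.smul_sum, ← Finset.sum_sub_distrib]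
      exact Finset.sum_congr rfl fun j _ => by rw [smul_smul, smul_smul, ← sub_smul]
    rw [hsum1, hx2, hpow, mul_sub]
    congr 1
    · rw [mul_smul_comm, mul_one]
    · have h2 : (u+v)^(n+2) * (u*v) = (u*v*(u+v)^n) * ((u+v)*(u+v)) := by ring
      have h3 : (u+v)*(u+v) = algebraMap ℝ A (4*t^2) := by
        rw [huv, ← map_mul]
        congr 1
        ring
      rw [h2, h3, mul_comm, ← Algebra.smul_def]
  -- conclude
  have hInCsum : InC T (∑ j ∈ range (n+2+1), c j • (u^j * v^(n+2-j))) :=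
    inC_sum _ _ fun j _ => inC_smul_gen ⟨x, j, n+2-j, rfl⟩ (hcnn j)
  rw [← hKI] at hInCsum
  have hpos : (0:ℝ) < (2*t)^(n+2) := by positivity
  have hfin : x*x + algebraMap ℝ A ε
      = ((2*t)^(n+2))⁻¹ • (algebraMap ℝ A ((2*t)^(n+2)) * (x*x + algebraMap ℝ A ε)) := by
    rw [← Algebra.smul_def, smul_smul, inv_mul_cancel₀ (ne_of_gt hpos), one_smul]
  rw [hfin]
  exact inC_smul hInCsum (by positivity)


/-- Cauchy-Schwarz for a PSD functional. -/
lemma cs (M : A →ₗ[ℝ] ℝ) (h : ∀ y : A, 0 ≤ M (y*y)) (y z : A) :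
    M (y*z)^2 ≤ M (y*y) * M (z*z) := by
  have key : ∀ s : ℝ, 0 ≤ M (z*z) * (s*s) + (2 * M (y*z)) * s + M (y*y) := by
    intro s
    have h1 := h (y + s • z)
    have hexp : (y + s • z) * (y + s • z)
        = (s*s) • (z*z) + (2*s) • (y*z) + y*y := by
      rw [Algebra.smul_def, Algebra.smul_def, Algebra.smul_def, map_mul, map_mul, map_ofNat]
      ring
    rw [hexp] at h1
    simp only [map_add, map_smul, smul_eq_mul] at h1
    ring_nf at h1 ⊢
    linarith
  have hd := discrim_le_zero key
  rw [discrim] at hd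
  nlinarith [hd]

/-- numeric growth lemma -/
lemma crux_num (H : ℕ → ℝ) (R C : ℝ) (hR : 0 < R)
    (h0 : ∀ k, 0 ≤ H k)
    (hlog : ∀ k, H (k+1) ^ 2 ≤ H k * H (k+2))
    (hup : ∀ k, H k ^ 2 ≤ C * (R^2) ^ k) :
    H 1 ≤ R * H 0 := by
  by_contra hcon
  push_neg at hcon
  rcases eq_or_lt_of_le (h0 0) with h00 | h00
  · have h1 := hlog 0
    rw [← h00, zero_mul] at h1
    have hH1 : H 1 = 0 := by nlinarith [sq_nonneg (H 1)]
    rw [hH1, ← h00, mul_zero] at hcon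
    exact lt_irrefl 0 hcon
  · obtain ⟨ρ, hρ⟩ : ∃ ρ : ℝ, ρ = H 1 / H 0 := ⟨_, rfl⟩
    have hρR : R < ρ := by
      rw [hρ, lt_div_iff₀ h00]
      linarith [hcon]
    have hρ0 : 0 < ρ := lt_trans hR hρR
    have hgrow : ∀ k, 0 < H k ∧ ρ * H k ≤ H (k+1) := by
      intro k
      induction k with
      | zero =>
        refine ⟨h00, ?_⟩
        rw [hρ, div_mul_cancel₀]
        exact ne_of_gt h00
      | succ k ih =>
        obtain ⟨hk0, hk1⟩ := ih
        have hk10 : 0 < H (k+1) := lt_of_lt_of_le (mul_pos hρ0 hk0) hk1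
        refine ⟨hk10, ?_⟩
        have hl := hlog k
        nlinarith [hl, hk0, hk1, hk10]
    have hgeom : ∀ k, H 0 * ρ ^ k ≤ H k := by
      intro k
      induction k with
      | zero => simp
      | succ k ih =>
        have h2 := (hgrow k).2
        calc H 0 * ρ ^ (k+1) = ρ * (H 0 * ρ ^ k) := by ring
          _ ≤ ρ * H k := by nlinarith [hρ0]
          _ ≤ H (k+1) := h2
    obtain ⟨q, hq⟩ : ∃ q : ℝ, q = ρ / R := ⟨_, rfl⟩
    have hq1 : 1 < q := by rw [hq]; exact (one_lt_div hR).mpr hρR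
    have hq0 : 0 < q := lt_trans one_pos hq1
    obtain ⟨N, hN⟩ := pow_unbounded_of_one_lt (C / (H 0 * H 0)) hq1
    have hup' := hup N
    have hg := hgeom N
    have hρN : ρ ^ N = q ^ N * R ^ N := by
      rw [hq, div_pow, div_mul_cancel₀]
      positivity
    have h1 : (H 0 * ρ ^ N)^2 ≤ C * (R^2)^N := by
      have hHN := h0 N
      have hρpow : (0:ℝ) ≤ H 0 * ρ ^ N := by positivity
      nlinarith [hg, hup']
    have hRR : (R^2)^N = R^N * R^N := by
      rw [← pow_mul, two_mul, pow_add]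
    have hq2 : q ^ N * q ^ N * (H 0 * H 0) * (R^N * R^N) ≤ C * (R^N * R^N) := by
      calc q ^ N * q ^ N * (H 0 * H 0) * (R^N * R^N) = (H 0 * ρ ^ N)^2 := by
            rw [hρN]; ring
        _ ≤ C * (R^2)^N := h1
        _ = C * (R^N * R^N) := by rw [hRR]
    have hRn0 : (0:ℝ) < R^N * R^N := by positivity
    have hfin : q ^ N * q ^ N * (H 0 * H 0) ≤ C := (mul_le_mul_iff_left₀ hRn0).mp hq2
    have hH00 : (0:ℝ) < H 0 * H 0 := mul_pos h00 h00
    have hqN1 : 1 ≤ q ^ N := one_le_pow₀ (le_of_lt hq1)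
    have hlast : C / (H 0 * H 0) < q ^ N * q ^ N := by
      calc C / (H 0 * H 0) < q ^ N := hN
        _ ≤ q ^ N * q ^ N := le_mul_of_one_le_left (by positivity) hqN1
    rw [div_lt_iff₀ hH00] at hlast
    linarith

lemma Malg (M : A →ₗ[ℝ] ℝ) (r : ℝ) (y : A) : M (algebraMap ℝ A r * y) = r * M y := by
  rw [← Algebra.smul_def, map_smul, smul_eq_mul]

def Good (T : A → ℝ) (M : A →ₗ[ℝ] ℝ) : Prop :=
  (∀ x : A, 0 ≤ M (x*x)) ∧ ∀ w x : A, M ((w*x)*(w*x)) ≤ T w^2 * M (x*x)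

lemma good_mom {M : A →ₗ[ℝ] ℝ} (hM : Good T M) :
    ∀ (w : A) (k : ℕ), M (w^(2*k)) ≤ T w^(2*k) * M 1 := by
  intro w k
  induction k with
  | zero => simp
  | succ k ih =>
    have h1 : w^(2*(k+1)) = (w*w^k)*(w*w^k) := by ring
    have h2 : w^k * w^k = w^(2*k) := by ring
    have h3 := hM.2 w (w^k)
    rw [h2] at h3
    calc M (w^(2*(k+1))) = M ((w*w^k)*(w*w^k)) := by rw [h1]
      _ ≤ T w^2 * M (w^(2*k)) := h3
      _ ≤ T w^2 * (T w^(2*k) * M 1) := by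
          apply mul_le_mul_of_nonneg_left ih (sq_nonneg _)
      _ = T w^(2*(k+1)) * M 1 := by ring

lemma crux (hT : ∀ a : A, 0 < T a) (M : A →ₗ[ℝ] ℝ) (e : A)
    (hM : ∀ y : A, 0 ≤ M (y*y))
    (hmom : ∀ (w : A) (k : ℕ), M (w^(2*k)) ≤ T w^(2*k) * M 1)
    (hN : ∀ y : A, 0 ≤ M (e*(y*y)))
    (w x : A) : M (e*((w*x)*(w*x))) ≤ T w^2 * M (e*(x*x)) := by
  set N : A →ₗ[ℝ] ℝ := M.comp (LinearMap.mulLeft ℝ e) with hNdef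
  have hNapp : ∀ y : A, N y = M (e * y) := fun y => rfl
  have hNpsd : ∀ y : A, 0 ≤ N (y*y) := fun y => hN y
  have hM1 : 0 ≤ M 1 := by simpa using hM 1
  have key := crux_num (fun k => N ((w^k*x)*(w^k*x))) (T w^2)
      (M ((e*(x*x))*(e*(x*x))) * M 1) (pow_pos (hT w) 2)
      (fun k => hNpsd _)
      (fun k => by
        have hcs := cs N hNpsd ((w^k*x)) ((w^(k+2)*x))
        have hyz : (w^k*x) * (w^(k+2)*x) = (w^(k+1)*x)*(w^(k+1)*x) := by ring
        rw [hyz] at hcs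
        exact hcs)
      (fun k => by
        have hrw : e * ((w^k*x)*(w^k*x)) = (e*(x*x)) * w^(2*k) := by ring
        have hcs := cs M hM (e*(x*x)) (w^(2*k))
        have hw4 : w^(2*k) * w^(2*k) = w^(2*(2*k)) := by ring
        rw [hw4] at hcs
        have hm := hmom w (2*k)
        have hwnn : 0 ≤ M (w^(2*(2*k))) := by
          have : w^(2*(2*k)) = w^(2*k) * w^(2*k) := by ring
          rw [this]; exact hM _
        have hznn : 0 ≤ M ((e*(x*x))*(e*(x*x))) := hM _
        have hTpow : T w^(2*(2*k)) = ((T w^2)^2)^k := by ring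
        calc N ((w^k*x)*(w^k*x)) ^ 2 = M ((e*(x*x)) * w^(2*k)) ^ 2 := by
              rw [hNapp, hrw]
          _ ≤ M ((e*(x*x))*(e*(x*x))) * M (w^(2*(2*k))) := hcs
          _ ≤ M ((e*(x*x))*(e*(x*x))) * (T w^(2*(2*k)) * M 1) := by
              apply mul_le_mul_of_nonneg_left _ hznn
              exact hmom w (2*k)
          _ = M ((e*(x*x))*(e*(x*x))) * M 1 * ((T w^2)^2)^k := by
              rw [hTpow]; ring)
  have h1 : N ((w^1*x)*(w^1*x)) = M (e*((w*x)*(w*x))) := by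
    rw [hNapp, pow_one]
  have h0 : N ((w^0*x)*(w^0*x)) = M (e*(x*x)) := by
    rw [hNapp, pow_zero, one_mul]
  simpa only [pow_one, pow_zero, one_mul, hNapp] using key

def Elem (T : A → ℝ) (e : A) : Prop :=
  ∃ b : A, e = algebraMap ℝ A (T b) + b ∨ e = algebraMap ℝ A (T b) - b

lemma good_step (hT : ∀ a : A, 0 < T a) {M : A →ₗ[ℝ] ℝ} (hM : Good T M) {e : A}
    (he : Elem T e) : Good T (M.comp (LinearMap.mulLeft ℝ e)) := by
  obtain ⟨b, hb⟩ := he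
  have htb : 0 < T b := hT b
  have hcl1 : ∀ x : A, 0 ≤ M (e*(x*x)) := by
    intro x
    have hkey : algebraMap ℝ A (2*T b) * (e*(x*x))
        = (e*x)*(e*x) + (algebraMap ℝ A (T b^2) * (x*x) - (b*x)*(b*x)) := by
      rcases hb with rfl | rfl <;>
      · rw [map_mul, map_ofNat, pow_two, map_mul]
        ring
    have hMkey := congrArg M hkey
    rw [Malg, map_add, map_sub, Malg] at hMkey
    have h1 := hM.1 (e*x)
    have h2 := hM.2 b x
    have : 0 ≤ 2*T b * M (e*(x*x)) := by
      rw [hMkey]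
      have : (b*x)*(b*x) = (b*x)*(b*x) := rfl
      nlinarith [h1, h2]
    nlinarith [this, htb]
  constructor
  · intro x
    exact hcl1 x
  · intro w x
    exact crux hT M e hM.1 (good_mom hM) hcl1 w x

lemma good_of_pos (hT : ∀ a : A, 0 < T a) (L : A →ₗ[ℝ] ℝ)
    (hL : ∀ x, InC T x → 0 ≤ L x) : Good T L := by
  have hpsd : ∀ x : A, 0 ≤ L (x*x) := by
    intro x
    have h : ∀ ε : ℝ, 0 < ε → 0 ≤ L (x*x) + ε * L 1 := by
      intro ε hε
      have h0 := hL _ (sq_add hT x hε)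
      rwa [map_add, Algebra.algebraMap_eq_smul_one, map_smul, smul_eq_mul] at h0
    by_contra hneg
    push_neg at hneg
    rcases le_or_gt (L 1) 0 with h1 | h1
    · have := h 1 one_pos; nlinarith
    · have hh := h (-(L (x*x)) / (2 * L 1)) (div_pos (by linarith) (by linarith))
      have heq : (-(L (x*x)) / (2 * L 1)) * L 1 = -(L (x*x))/2 := by
        field_simp
      rw [heq] at hh
      linarith
  have hmom : ∀ (w : A) (k : ℕ), L (w^(2*k)) ≤ T w^(2*k) * L 1 := by
    intro w k
    have h0 := hL _ (even_pow hT w k)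
    rw [map_sub, Algebra.algebraMap_eq_smul_one, map_smul, smul_eq_mul] at h0
    linarith
  refine ⟨hpsd, fun w x => ?_⟩
  have h := crux hT L 1 hpsd hmom (fun y => by rw [one_mul]; exact hpsd y) w x
  rw [one_mul, one_mul] at h
  exact h

lemma good_prod (hT : ∀ a : A, 0 < T a) (L : A →ₗ[ℝ] ℝ)
    (hL : ∀ x, InC T x → 0 ≤ L x) :
    ∀ l : List A, (∀ e ∈ l, Elem T e) → Good T (L.comp (LinearMap.mulLeft ℝ l.prod)) := by
  intro l
  induction l with
  | nil =>
    intro _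
    have : L.comp (LinearMap.mulLeft ℝ (List.prod (α := A) [])) = L :=
      LinearMap.ext fun y => by simp
    rw [this]
    exact good_of_pos hT L hL
  | cons e l ih =>
    intro h
    have hGood := ih fun e' he' => h e' (List.mem_cons_of_mem _ he')
    have hstep := good_step hT hGood (h e List.mem_cons_self)
    have heq : (L.comp (LinearMap.mulLeft ℝ l.prod)).comp (LinearMap.mulLeft ℝ e)
        = L.comp (LinearMap.mulLeft ℝ ((e :: l).prod)) :=
      LinearMap.ext fun y => by
        simp only [LinearMap.comp_apply, LinearMap.mulLeft_apply, List.prod_cons]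
        exact congrArg L (by ring)
    rwa [heq] at hstep

lemma pos_on_prods (hT : ∀ a : A, 0 < T a) (L : A →ₗ[ℝ] ℝ)
    (hL : ∀ x, InC T x → 0 ≤ L x) (l : List A) (hl : ∀ e ∈ l, Elem T e) (x : A) :
    0 ≤ L (l.prod * (x*x)) :=
  (good_prod hT L hL l hl).1 x


lemma isGen_one : IsGen T (1:A) := ⟨0, 0, 0, by simp⟩

lemma isGen_Tplus (a : A) : IsGen T (algebraMap ℝ A (T a) + a) :=
  ⟨a, 0, 1, by simp⟩

lemma isGen_Tminus (a : A) : IsGen T (algebraMap ℝ A (T a) - a) :=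
  ⟨a, 1, 0, by simp⟩

lemma exists_state (hT : ∀ a : A, 0 < T a) (h1 : (1:A) ≠ 0)
    (hnegone : ¬ InC T (-1 : A)) (c : A) (hcnot : ¬ InC T c) :
    ∃ L : A →ₗ[ℝ] ℝ, (∀ x, InC T x → 0 ≤ L x) ∧ L 1 = 1 ∧ L c ≤ 0 := by
  set s : ConvexCone ℝ A :=
    { carrier := { x | ∃ y : A, InC T y ∧ ∃ r : ℝ, 0 ≤ r ∧ x = y + r • (-c) }
      smul_mem' := by
        rintro t ht x ⟨y, hy, r, hr, rfl⟩
        exact ⟨t • y, inC_smul hy (le_of_lt ht), t * r,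
          mul_nonneg (le_of_lt ht) hr, by rw [smul_add, smul_smul]⟩
      add_mem' := by
        rintro x ⟨y, hy, r, hr, rfl⟩ x' ⟨y', hy', r', hr', rfl⟩
        exact ⟨y + y', inC_add hy hy', r + r', by linarith, by rw [add_smul]; abel⟩ } with hs
  have hmem : ∀ x : A, InC T x → x ∈ s := fun x hx => ⟨x, hx, 0, le_refl _, by simp⟩
  set f : A →ₗ.[ℝ] ℝ := LinearPMap.mkSpanSingleton (1:A) (1:ℝ) h1 with hf
  have hfdom : f.domain = Submodule.span ℝ {(1:A)} := rfl
  have happly : ∀ (r : ℝ) (hx : r • (1:A) ∈ f.domain), f ⟨r • (1:A), hx⟩ = r := by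
    intro r hx
    have h : f ⟨r • (1:A), hx⟩ = r • (1:ℝ) := LinearPMap.mkSpanSingleton'_apply _ _ _ r hx
    simpa using h
  have nonneg : ∀ x : f.domain, (x : A) ∈ s → 0 ≤ f x := by
    rintro ⟨x, hx⟩ hxs
    obtain ⟨r, rfl⟩ := Submodule.mem_span_singleton.mp hx
    rw [show (⟨r • (1:A), hx⟩ : f.domain) = ⟨r • (1:A), hx⟩ from rfl, happly r hx]
    by_contra hr
    push_neg at hr
    obtain ⟨y, hy, r', hr', hxy⟩ := hxs
    have hxy' : r • (1:A) = y + r' • (-c) := hxy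
    have hyval : y = r • (1:A) + r' • c := by
      rw [hxy', smul_neg]; abel
    rcases eq_or_lt_of_le hr' with hr'0 | hr'0
    · -- r' = 0 : r • 1 ∈ InC with r < 0 ⟹ -1 ∈ InC
      apply hnegone
      have hy' : InC T (r • (1:A)) := by
        rw [hyval, ← hr'0, zero_smul, add_zero] at hy
        exact hy
      have := inC_smul hy' (r := (-r)⁻¹) (inv_nonneg.mpr (by linarith))
      have heq : (-r)⁻¹ • (r • (1:A)) = (-1 : A) := by
        rw [smul_smul]
        have : (-r)⁻¹ * r = -1 := by
          have hrne : r ≠ 0 := ne_of_lt hr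
          field_simp
        rw [this, neg_smul, one_smul]
      rwa [heq] at this
    · -- r' > 0 : c ∈ InC
      apply hcnot
      have hsum : InC T (y + (-r) • (1:A)) :=
        inC_add hy (inC_smul (inC_gen isGen_one) (by linarith))
      have heq : (r')⁻¹ • (y + (-r) • (1:A)) = c := by
        rw [hyval]
        have : r • (1:A) + r' • c + (-r) • (1:A) = r' • c := by
          rw [neg_smul]; abel
        rw [this, smul_smul, inv_mul_cancel₀ (ne_of_gt hr'0), one_smul]
      have := inC_smul hsum (r := (r')⁻¹) (inv_nonneg.mpr (by linarith))
      rwa [heq] at this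
  have dense : ∀ y : A, ∃ x : f.domain, (x : A) + y ∈ s := by
    intro y
    refine ⟨⟨T y • (1:A), Submodule.mem_span_singleton.mpr ⟨T y, rfl⟩⟩, ?_⟩
    apply hmem
    have : T y • (1:A) + y = algebraMap ℝ A (T y) + y := by
      rw [Algebra.algebraMap_eq_smul_one]
    rw [this]
    exact inC_gen (isGen_Tplus y)
  obtain ⟨L, hLf, hLs⟩ := riesz_extension (s.toPointedCone ⟨0, inC_zero, 0, le_refl _, by simp⟩) f nonneg dense
  refine ⟨L, fun x hx => hLs x (hmem x hx), ?_, ?_⟩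
  · have h1mem : (1:A) ∈ f.domain := Submodule.mem_span_singleton.mpr ⟨1, by simp⟩
    have := hLf ⟨(1:A), h1mem⟩
    have happ1 : f ⟨(1:A), h1mem⟩ = 1 := by
      have := happly 1 (by simpa using h1mem)
      simpa using this
    simp only [happ1] at this
    simpa using this
  · have hnc : (-c) ∈ s := ⟨0, inC_zero, 1, zero_le_one, by simp⟩
    have := hLs (-c) hnc
    simp only [map_neg] at this
    linarith


def SS (T : A → ℝ) : Set (A → ℝ) :=
  {φ | (∀ x y : A, φ (x+y) = φ x + φ y) ∧ (∀ (r : ℝ) (x : A), φ (r • x) = r * φ x)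
    ∧ φ 1 = 1 ∧ ∀ (l : List A) (x : A), (∀ e ∈ l, Elem T e) → 0 ≤ φ (l.prod * (x*x))}

lemma SS_zero {φ : A → ℝ} (hφ : φ ∈ SS T) : φ 0 = 0 := by
  have := hφ.1 0 0
  simp only [add_zero] at this
  linarith

lemma SS_algebraMap {φ : A → ℝ} (hφ : φ ∈ SS T) (r : ℝ) : φ (algebraMap ℝ A r) = r := by
  rw [Algebra.algebraMap_eq_smul_one, hφ.2.1, hφ.2.2.1, mul_one]

lemma SS_sq {φ : A → ℝ} (hφ : φ ∈ SS T) (x : A) : 0 ≤ φ (x*x) := by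
  have := hφ.2.2.2 [] x (by simp)
  simpa using this

lemma SS_single {φ : A → ℝ} (hφ : φ ∈ SS T) (e x : A) (he : Elem T e) :
    0 ≤ φ (e * (x*x)) := by
  have := hφ.2.2.2 [e] x (by simpa using he)
  simpa using this

lemma SS_pair {φ : A → ℝ} (hφ : φ ∈ SS T) (e e' x : A) (he : Elem T e) (he' : Elem T e') :
    0 ≤ φ (e * (e' * (x*x))) := by
  have := hφ.2.2.2 [e, e'] x (by
    intro u hu
    rcases List.mem_pair.mp hu with rfl | rfl
    · exact he
    · exact he')
  simp only [List.prod_cons, List.prod_nil, mul_one] at this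
  have heq : e * e' * (x*x) = e * (e' * (x*x)) := by ring
  rwa [heq] at this

lemma SS_bounds {φ : A → ℝ} (hφ : φ ∈ SS T) (a : A) : |φ a| ≤ T a := by
  have hplus := SS_single hφ _ 1 ⟨a, Or.inl rfl⟩
  have hminus := SS_single hφ _ 1 ⟨a, Or.inr rfl⟩
  rw [mul_one, mul_one] at hplus hminus
  have h1 : φ (algebraMap ℝ A (T a) + a) = T a + φ a := by
    rw [hφ.1, SS_algebraMap hφ]
  have h2 : φ (algebraMap ℝ A (T a) - a) = T a - φ a := by
    have : algebraMap ℝ A (T a) - a = algebraMap ℝ A (T a) + (-1 : ℝ) • a := by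
      rw [neg_smul, one_smul]; ring
    rw [this, hφ.1, hφ.2.1]
    ring_nf
    rw [SS_algebraMap hφ]
    ring
  rw [h1] at hplus
  rw [h2] at hminus
  rw [abs_le]
  constructor <;> linarith

lemma SS_convex : Convex ℝ (SS T) := by
  intro φ hφ ψ hψ a b ha hb hab
  have happ : ∀ x : A, (a • φ + b • ψ) x = a * φ x + b * ψ x := fun x => rfl
  refine ⟨fun x y => ?_, fun r x => ?_, ?_, fun l x hl => ?_⟩
  · rw [happ, happ, happ, hφ.1, hψ.1]; ring
  · rw [happ, happ, hφ.2.1, hψ.2.1]; ring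
  · rw [happ, hφ.2.2.1, hψ.2.2.1]; linarith
  · rw [happ]
    have h1 := hφ.2.2.2 l x hl
    have h2 := hψ.2.2.2 l x hl
    nlinarith

lemma SS_isClosed : IsClosed (SS T) := by
  have h1 : SS T = (⋂ (x : A) (y : A), {φ : A → ℝ | φ (x+y) = φ x + φ y})
      ∩ ((⋂ (r : ℝ) (x : A), {φ : A → ℝ | φ (r • x) = r * φ x})
      ∩ ({φ : A → ℝ | φ 1 = 1}
      ∩ (⋂ (l : List A) (x : A) (_ : ∀ e ∈ l, Elem T e),
          {φ : A → ℝ | 0 ≤ φ (l.prod * (x*x))}))) := by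
    ext φ
    simp only [SS, Set.mem_setOf_eq, Set.mem_inter_iff, Set.mem_iInter]
  rw [h1]
  refine IsClosed.inter ?_ (IsClosed.inter ?_ (IsClosed.inter ?_ ?_))
  · exact isClosed_iInter fun x => isClosed_iInter fun y =>
      isClosed_eq (continuous_apply (x+y)) ((continuous_apply x).add (continuous_apply y))
  · exact isClosed_iInter fun r => isClosed_iInter fun x =>
      isClosed_eq (continuous_apply _) (continuous_const.mul (continuous_apply _))
  · exact isClosed_eq (continuous_apply _) continuous_const
  · exact isClosed_iInter fun l => isClosed_iInter fun x => isClosed_iInter fun _ =>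
      isClosed_le continuous_const (continuous_apply _)

lemma SS_isCompact : IsCompact (SS T) := by
  have hsub : SS T ⊆ Set.pi Set.univ (fun a : A => Set.Icc (-(T a)) (T a)) := by
    intro φ hφ
    intro a _
    have := SS_bounds hφ a
    rw [abs_le] at this
    exact ⟨this.1, this.2⟩
  exact IsCompact.of_isClosed_subset
    (isCompact_univ_pi fun a => isCompact_Icc) SS_isClosed hsub


def toLin (φ : A → ℝ) (hφ : φ ∈ SS T) : A →ₗ[ℝ] ℝ where
  toFun := φ
  map_add' := hφ.1
  map_smul' := fun r x => by simp [hφ.2.1 r x]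

lemma SS_mulAlg {φ : A → ℝ} (hφ : φ ∈ SS T) (r : ℝ) (y : A) :
    φ (algebraMap ℝ A r * y) = r * φ y := by
  rw [← Algebra.smul_def, hφ.2.1]

lemma SS_extreme_mul (hT : ∀ a : A, 0 < T a) {φ : A → ℝ}
    (hext : φ ∈ Set.extremePoints ℝ (SS T)) : ∀ b x : A, φ (b*x) = φ b * φ x := by
  obtain ⟨hφ, hextr⟩ := hext
  intro b x
  set t := T b with htdef
  have ht : 0 < t := hT b
  set ep : A := algebraMap ℝ A t + b with hepdef
  set em : A := algebraMap ℝ A t - b with hemdef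
  have hep : Elem T ep := ⟨b, Or.inl rfl⟩
  have hem : Elem T em := ⟨b, Or.inr rfl⟩
  have hp0 : 0 ≤ φ ep := by
    have := SS_single hφ ep 1 hep
    simpa using this
  have hm0 : 0 ≤ φ em := by
    have := SS_single hφ em 1 hem
    simpa using this
  have hsum : φ ep + φ em = 2*t := by
    rw [← hφ.1]
    have : ep + em = algebraMap ℝ A (2*t) := by
      rw [hepdef, hemdef, map_mul, map_ofNat]; ring
    rw [this, SS_algebraMap hφ]
  have hφb : φ ep = t + φ b := by
    rw [hepdef, hφ.1, SS_algebraMap hφ]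
  have hepx : ∀ y : A, φ (ep * y) = t * φ y + φ (b * y) := by
    intro y
    have : ep * y = algebraMap ℝ A t * y + b * y := by rw [hepdef]; ring
    rw [this, hφ.1, SS_mulAlg hφ]
  -- main claim
  have hkey : φ (ep * x) = φ ep * φ x := by
    rcases eq_or_lt_of_le hp0 with hp | hp
    · -- φ ep = 0
      have hepep : φ (ep * ep) = 0 := by
        have h1 : ep * ep = algebraMap ℝ A (2*t) * ep - ep * (em * (1*1)) := by
          rw [hepdef, hemdef, map_mul, map_ofNat]; ring
        have h2 : φ (ep*ep) = 2*t*φ ep - φ (ep * (em * (1*1))) := by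
          rw [h1]
          have hsub : ∀ u v : A, φ (u - v) = φ u - φ v := by
            intro u v
            have := hφ.1 (u - v) v
            simp only [sub_add_cancel] at this
            linarith
          rw [hsub, SS_mulAlg hφ]
        have h3 := SS_pair hφ ep em 1 hep hem
        have h4 := SS_sq hφ ep
        rw [← hp] at h2
        simp only [mul_zero] at h2
        linarith
      have hcs := cs (toLin φ hφ) (SS_sq hφ) ep x
      have : φ (ep * x)^2 ≤ 0 := by
        have h5 := SS_sq hφ x
        calc φ (ep*x)^2 ≤ φ (ep*ep) * φ (x*x) := hcs
          _ = 0 := by rw [hepep, zero_mul]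
      have h6 : φ (ep * x) = 0 := by nlinarith [sq_nonneg (φ (ep*x))]
      rw [h6, ← hp, zero_mul]
    · rcases eq_or_lt_of_le hm0 with hm | hm
      · -- φ em = 0
        have hemem : φ (em * em) = 0 := by
          have h1 : em * em = algebraMap ℝ A (2*t) * em - em * (ep * (1*1)) := by
            rw [hepdef, hemdef, map_mul, map_ofNat]; ring
          have h2 : φ (em*em) = 2*t*φ em - φ (em * (ep * (1*1))) := by
            rw [h1]
            have hsub : ∀ u v : A, φ (u - v) = φ u - φ v := by
              intro u v
              have := hφ.1 (u - v) v
              simp only [sub_add_cancel] at this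
              linarith
            rw [hsub, SS_mulAlg hφ]
          have h3 := SS_pair hφ em ep 1 hem hep
          have h4 := SS_sq hφ em
          rw [← hm] at h2
          simp only [mul_zero] at h2
          linarith
        have hcs := cs (toLin φ hφ) (SS_sq hφ) em x
        have : φ (em * x)^2 ≤ 0 := by
          calc φ (em*x)^2 ≤ φ (em*em) * φ (x*x) := hcs
            _ = 0 := by rw [hemem, zero_mul]
        have h6 : φ (em * x) = 0 := by nlinarith [sq_nonneg (φ (em*x))]
        -- ep = aM (2t) - em
        have h7 : ep * x = algebraMap ℝ A (2*t) * x - em * x := by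
          rw [hepdef, hemdef, map_mul, map_ofNat]; ring
        have hsub : ∀ u v : A, φ (u - v) = φ u - φ v := by
          intro u v
          have := hφ.1 (u - v) v
          simp only [sub_add_cancel] at this
          linarith
        have h8 : φ (ep * x) = 2*t*φ x := by
          rw [h7, hsub, SS_mulAlg hφ, h6, sub_zero]
        have h9 : φ ep = 2*t := by linarith [hsum]
        rw [h8, h9]
      · -- both positive
        set φ1 : A → ℝ := fun y => φ (ep*y) / φ ep with hφ1def
        set φ2 : A → ℝ := fun y => φ (em*y) / φ em with hφ2def
        have hmem1 : φ1 ∈ SS T := by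
          refine ⟨fun u v => ?_, fun r u => ?_, ?_, fun l u hl => ?_⟩
          · simp only [hφ1def]
            rw [mul_add, hφ.1]
            ring
          · simp only [hφ1def]
            rw [mul_smul_comm, hφ.2.1]
            ring
          · simp only [hφ1def]
            rw [mul_one, div_self (ne_of_gt hp)]
          · simp only [hφ1def]
            apply div_nonneg _ (le_of_lt hp)
            have heq : ep * (l.prod * (u*u)) = (ep :: l).prod * (u*u) := by
              rw [List.prod_cons]; ring
            rw [heq]
            exact hφ.2.2.2 (ep :: l) u (by
              intro e' he'
              rcases List.mem_cons.mp he' with rfl | h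
              · exact hep
              · exact hl e' h)
        have hmem2 : φ2 ∈ SS T := by
          refine ⟨fun u v => ?_, fun r u => ?_, ?_, fun l u hl => ?_⟩
          · simp only [hφ2def]
            rw [mul_add, hφ.1]
            ring
          · simp only [hφ2def]
            rw [mul_smul_comm, hφ.2.1]
            ring
          · simp only [hφ2def]
            rw [mul_one, div_self (ne_of_gt hm)]
          · simp only [hφ2def]
            apply div_nonneg _ (le_of_lt hm)
            have heq : em * (l.prod * (u*u)) = (em :: l).prod * (u*u) := by
              rw [List.prod_cons]; ring
            rw [heq]
            exact hφ.2.2.2 (em :: l) u (by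
              intro e' he'
              rcases List.mem_cons.mp he' with rfl | h
              · exact hem
              · exact hl e' h)
        have hdecomp : (φ ep/(2*t)) • φ1 + (φ em/(2*t)) • φ2 = φ := by
          funext y
          simp only [Pi.add_apply, Pi.smul_apply, smul_eq_mul, hφ1def, hφ2def]
          have h1 : φ ep / (2*t) * (φ (ep*y)/φ ep) = φ (ep*y) / (2*t) := by
            field_simp
          have h2 : φ em / (2*t) * (φ (em*y)/φ em) = φ (em*y) / (2*t) := by
            field_simp
          rw [h1, h2, ← add_div]
          have h3 : φ (ep*y) + φ (em*y) = 2*t*φ y := by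
            rw [← hφ.1]
            have : ep*y + em*y = algebraMap ℝ A (2*t) * y := by
              rw [hepdef, hemdef, map_mul, map_ofNat]; ring
            rw [this, SS_mulAlg hφ]
          rw [h3]
          field_simp
        have hseg : φ ∈ openSegment ℝ φ1 φ2 := by
          refine ⟨φ ep/(2*t), φ em/(2*t), by positivity, by positivity, ?_, hdecomp⟩
          rw [← add_div, hsum, div_self (by positivity)]
        have heq1 := hextr hmem1 hmem2 hseg
        have : φ1 x = φ x := by rw [heq1]
        simp only [hφ1def] at this
        field_simp at this
        linarith [this]
  -- conclude
  have := hepx x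
  rw [hkey, hφb] at this
  linarith [this]


lemma exists_char (hT : ∀ a : A, 0 < T a) (h1 : (1:A) ≠ 0)
    (hnegone : ¬ InC T (-1 : A)) (c : A) (hcnot : ¬ InC T c) :
    ∃ ψ : A →ₐ[ℝ] ℝ, (∀ a, |ψ a| ≤ T a) ∧ ψ c ≤ 0 := by
  obtain ⟨L, hLpos, hL1, hLc⟩ := exists_state hT h1 hnegone c hcnot
  have hLSS : ⇑L ∈ SS T := by
    refine ⟨fun x y => map_add L x y, fun r x => by rw [map_smul]; rfl, hL1, ?_⟩
    exact fun l x hl => pos_on_prods hT L hLpos l hl x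
  have hne : (SS T).Nonempty := ⟨⇑L, hLSS⟩
  obtain ⟨φm, hφm, hmin⟩ := SS_isCompact.exists_isMinOn hne
    ((continuous_apply c).continuousOn)
  set m := φm c with hmdef
  set F := SS T ∩ {φ : A → ℝ | φ c = m} with hFdef
  have hFcomp : IsCompact F :=
    SS_isCompact.inter_right (isClosed_eq (continuous_apply c) continuous_const)
  have hFne : F.Nonempty := ⟨φm, hφm, rfl⟩
  have hFconv : Convex ℝ F := by
    apply SS_convex.inter
    intro u hu v hv a b ha hb hab
    simp only [Set.mem_setOf_eq] at hu hv ⊢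
    have : (a • u + b • v) c = a * u c + b * v c := rfl
    rw [this, hu, hv]
    linear_combination m * hab
  obtain ⟨φ0, hφ0ext⟩ := hFcomp.extremePoints_nonempty hFne
  have hφ0F : φ0 ∈ F := hφ0ext.1
  have hφ0SS : φ0 ∈ SS T := hφ0F.1
  have hφ0c : φ0 c = m := hφ0F.2
  have hext : φ0 ∈ Set.extremePoints ℝ (SS T) := by
    refine ⟨hφ0SS, ?_⟩
    intro x1 hx1 x2 hx2 hseg
    obtain ⟨a, b', ha, hb, hab, hsum⟩ := hseg
    have h1' : m ≤ x1 c := hmin hx1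
    have h2' : m ≤ x2 c := hmin hx2
    have heval : a * x1 c + b' * x2 c = m := by
      have hcf : (a • x1 + b' • x2) c = φ0 c := congrFun hsum c
      have : (a • x1 + b' • x2) c = a * x1 c + b' * x2 c := rfl
      rw [this] at hcf
      rw [hcf, hφ0c]
    have key1 : a * (x1 c - m) + b' * (x2 c - m) = 0 := by
      linear_combination heval - m * hab
    have t1 : 0 ≤ a * (x1 c - m) := mul_nonneg ha.le (by linarith)
    have t2 : 0 ≤ b' * (x2 c - m) := mul_nonneg hb.le (by linarith)
    have z1 : a * (x1 c - m) = 0 := by linarith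
    have z2 : b' * (x2 c - m) = 0 := by linarith
    have hx1c : x1 c = m := by
      rcases mul_eq_zero.mp z1 with h | h
      · exact absurd h (ne_of_gt ha)
      · linarith
    have hx2c : x2 c = m := by
      rcases mul_eq_zero.mp z2 with h | h
      · exact absurd h (ne_of_gt hb)
      · linarith
    exact hφ0ext.2 ⟨hx1, hx1c⟩ ⟨hx2, hx2c⟩ ⟨a, b', ha, hb, hab, hsum⟩
  have hmul := SS_extreme_mul hT hext
  refine ⟨{ toFun := φ0,
            map_one' := hφ0SS.2.2.1,
            map_mul' := fun x y => hmul x y,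
            map_zero' := SS_zero hφ0SS,
            map_add' := hφ0SS.1,
            commutes' := fun r => SS_algebraMap hφ0SS r }, ?_, ?_⟩
  · intro a
    exact SS_bounds hφ0SS a
  · show φ0 c ≤ 0
    rw [hφ0c]
    calc m ≤ L c := hmin hLSS
      _ ≤ 0 := hLc


end Stmt8

theorem stmt8 (hX : Nonempty (A →ₐ[ℝ] ℝ)) (T : A → ℝ) (hT : ∀ a : A, 0 < T a) (c : A)
    (hc : ∀ ψ : A →ₐ[ℝ] ℝ, (∀ a : A, |ψ a| ≤ T a) → 0 < ψ c) :
    ∃ (k : ℕ) (coef : Fin k → ℝ) (g : Fin k → A),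
      (∀ i, 0 ≤ coef i) ∧
      (∀ i, ∃ (a : A) (p q : ℕ),
        g i = (algebraMap ℝ A (T a) - a) ^ p * (algebraMap ℝ A (T a) + a) ^ q) ∧
      c = ∑ i, coef i • g i := by
  have goal : Stmt8.InC T c := by
    by_cases h1 : (1:A) = 0
    · have hc0 : c = 0 := by
        calc c = c * 1 := (mul_one c).symm
          _ = c * 0 := by rw [h1]
          _ = 0 := mul_zero c
      rw [hc0]
      exact Stmt8.inC_zero
    · by_cases hneg : Stmt8.InC T (-1 : A)
      · have hgen := Stmt8.inC_gen (Stmt8.isGen_Tplus (T := T) c)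
        have hsmul := Stmt8.inC_smul hneg (le_of_lt (hT c))
        have hadd := Stmt8.inC_add hgen hsmul
        have heq : (algebraMap ℝ A (T c) + c) + (T c) • (-1:A) = c := by
          rw [smul_neg, Algebra.algebraMap_eq_smul_one]
          abel
        rwa [heq] at hadd
      · by_cases hcnot : Stmt8.InC T c
        · exact hcnot
        · obtain ⟨ψ, hb, hc0⟩ := Stmt8.exists_char hT h1 hneg c hcnot
          exact absurd (hc ψ hb) (not_lt.mpr hc0)
  exact goal
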